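/- Let ε ∈ (0, 1/2). Let B ∈ ℝ^{m×n} and let R ∈ ℝ^{n×n} be invertible, and suppose that every singular value of B R^{−1} lies in the interval [1−ε, 1+ε] (equivalently, (1−ε)‖x‖₂ ≤ ‖B R^{−1} x‖₂ ≤ (1+ε)‖x‖₂ for all x ∈ ℝ^n). Then B has rank n, and for every j ∈ [m], (1+2ε)^{−2} · σ_j(B) ≤ ‖e_jᵀ B R^{−1}‖₂² ≤ (1−2ε)^{−2} · σ_j(B). -/

import Mathlib

open Matrix

/-- The Euclidean (ℓ₂) norm of a vector in `ℝ^k`. -/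
noncomputable def l2 {k : ℕ} (x : Fin k → ℝ) : ℝ := Real.sqrt (∑ i, x i ^ 2)

/-- The leverage score of row `j` of `B`: `σ_j(B) = b_jᵀ (BᵀB)⁻¹ b_j`. -/
noncomputable def levScore {m n : ℕ} (B : Matrix (Fin m) (Fin n) ℝ) (j : Fin m) : ℝ :=
  B j ⬝ᵥ ((Bᵀ * B)⁻¹).mulVec (B j)

private lemma l2_nonneg {k : ℕ} (x : Fin k → ℝ) : 0 ≤ l2 x := Real.sqrt_nonneg _

private lemma l2_sq {k : ℕ} (x : Fin k → ℝ) : l2 x ^ 2 = ∑ i, x i ^ 2 :=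
  Real.sq_sqrt (by positivity)

private lemma dot_self_eq {k : ℕ} (x : Fin k → ℝ) : x ⬝ᵥ x = l2 x ^ 2 := by
  rw [l2_sq]; simp [dotProduct, sq]

private lemma dot_le_l2 {k : ℕ} (x y : Fin k → ℝ) : x ⬝ᵥ y ≤ l2 x * l2 y :=
  Real.sum_mul_le_sqrt_mul_sqrt _ _ _

private lemma l2_pos {k : ℕ} {x : Fin k → ℝ} (hx : x ≠ 0) : 0 < l2 x := by
  rcases (l2_nonneg x).lt_or_eq with h | h
  · exact h
  · exfalso
    apply hx
    funext i
    have h0 : ∑ i, x i ^ 2 = 0 := by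
      have := l2_sq x
      rw [← h] at this
      simpa using this.symm
    have := (Finset.sum_eq_zero_iff_of_nonneg (fun i _ => sq_nonneg (x i))).mp h0 i
      (Finset.mem_univ i)
    simpa using pow_eq_zero_iff (n := 2) (by norm_num) |>.mp this


private lemma scalar_bound {ε p q : ℝ} (hε0 : 0 < ε) (hε2 : ε < 1/2) (hp : 0 ≤ p)
    (hq : 0 ≤ q) (hl : (1 - ε) * p ≤ q) (hu : q ≤ (1 + ε) * p) :
    ((1 + 2*ε)^2)⁻¹ * p^2 ≤ q^2 ∧ q^2 ≤ ((1 - 2*ε)^2)⁻¹ * p^2 := by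
  have hu1 : (1:ℝ) ≤ (1 - ε) * (1 + 2*ε) := by nlinarith
  have hc1 : ((1 + 2*ε)^2)⁻¹ ≤ (1 - ε)^2 := by
    rw [inv_eq_one_div, div_le_iff₀ (by positivity)]
    nlinarith [sq_nonneg ((1 - ε) * (1 + 2*ε) - 1)]
  have hv0 : (0:ℝ) ≤ (1 + ε) * (1 - 2*ε) := by nlinarith
  have hv1 : (1 + ε) * (1 - 2*ε) ≤ 1 := by nlinarith
  have hc2 : (1 + ε)^2 ≤ ((1 - 2*ε)^2)⁻¹ := by
    rw [inv_eq_one_div, le_div_iff₀ (by nlinarith)]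
    nlinarith [mul_le_mul hv1 hv1 hv0 zero_le_one]
  have ht1 : ((1 - ε) * p)^2 ≤ q^2 :=
    pow_le_pow_left₀ (by nlinarith) hl 2
  have ht2 : q^2 ≤ ((1 + ε) * p)^2 := pow_le_pow_left₀ hq hu 2
  constructor
  · nlinarith [mul_le_mul_of_nonneg_right hc1 (sq_nonneg p)]
  · nlinarith [mul_le_mul_of_nonneg_right hc2 (sq_nonneg p)]

theorem stmt10 {m n : ℕ} (ε : ℝ) (hε : ε ∈ Set.Ioo (0 : ℝ) (1/2))
    (B : Matrix (Fin m) (Fin n) ℝ) (R : Matrix (Fin n) (Fin n) ℝ) (hR : IsUnit R.det)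
    (h : ∀ x : Fin n → ℝ, (1 - ε) * l2 x ≤ l2 ((B * R⁻¹).mulVec x) ∧
          l2 ((B * R⁻¹).mulVec x) ≤ (1 + ε) * l2 x) :
    B.rank = n ∧
      ∀ j : Fin m,
        ((1 + 2*ε)^2)⁻¹ * levScore B j ≤ ∑ i, ((B * R⁻¹) j i)^2 ∧
        (∑ i, ((B * R⁻¹) j i)^2) ≤ ((1 - 2*ε)^2)⁻¹ * levScore B j := by
  obtain ⟨hε0, hε2⟩ := hε
  have hε1 : (0:ℝ) < 1 - ε := by linarith
  set A := B * R⁻¹ with hA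
  have hBA : A * R = B := Matrix.nonsing_inv_mul_cancel_right R B hR
  set M := Aᵀ * A with hM
  have hquad : ∀ x : Fin n → ℝ, x ⬝ᵥ M.mulVec x = (A.mulVec x) ⬝ᵥ (A.mulVec x) := by
    intro x
    rw [hM, ← mulVec_mulVec, dotProduct_mulVec, vecMul_transpose]
  have hMpd : M.PosDef := by
    refine Matrix.PosDef.of_dotProduct_mulVec_pos ?_ (fun x hx => ?_)
    · rw [Matrix.IsHermitian, conjTranspose_eq_transpose_of_trivial, hM, transpose_mul,
        transpose_transpose]
    · have hx2 : (0:ℝ) < l2 x := l2_pos hx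
      have h1 := (h x).1
      have : (0:ℝ) < l2 (A.mulVec x) := lt_of_lt_of_le (by positivity) h1
      have hpos : (0:ℝ) < (A.mulVec x) ⬝ᵥ (A.mulVec x) := by
        rw [dot_self_eq]; positivity
      simpa [hquad x] using hpos
  have hMdet : IsUnit M.det := hMpd.det_pos.ne'.isUnit
  have hBtB : Bᵀ * B = Rᵀ * M * R := by
    rw [← hBA, transpose_mul, hM]
    simp only [Matrix.mul_assoc]
  have hrank : B.rank = n := by
    have h1 : (Bᵀ * B).rank = B.rank := Matrix.rank_transpose_mul_self B
    have h2 : IsUnit (Bᵀ * B).det := by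
      rw [hBtB]
      simp only [det_mul, det_transpose]
      exact (hR.mul hMdet).mul hR
    rw [← h1, Matrix.rank_of_isUnit _ ((Matrix.isUnit_iff_isUnit_det _).mpr h2)]
    simp
  refine ⟨hrank, fun j => ?_⟩
  set a : Fin n → ℝ := fun i => A j i with ha
  set w := M⁻¹.mulVec a with hw
  have hMw : M.mulVec w = a := by
    rw [hw, mulVec_mulVec, Matrix.mul_nonsing_inv _ hMdet, one_mulVec]
  set z := A.mulVec w with hz
  have hAtz : Aᵀ.mulVec z = a := by
    rw [hz, mulVec_mulVec, ← hM, hMw]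
  -- levScore B j = a ⬝ᵥ w
  have hrow : B j = Rᵀ.mulVec a := by
    funext i
    rw [← hBA]
    simp [Matrix.mul_apply, mulVec, dotProduct, ha, mul_comm]
  have hinv : (Bᵀ * B)⁻¹ = R⁻¹ * (M⁻¹ * (R⁻¹)ᵀ) := by
    rw [hBtB, Matrix.mul_inv_rev, Matrix.mul_inv_rev, Matrix.transpose_nonsing_inv]
  have hlev : levScore B j = a ⬝ᵥ w := by
    rw [levScore, hrow, hinv, mulVec_mulVec, mulVec_transpose, ← dotProduct_mulVec,
      mulVec_mulVec]
    have : R * (R⁻¹ * (M⁻¹ * R⁻¹ᵀ) * Rᵀ) = M⁻¹ := by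
      rw [← mul_assoc, ← mul_assoc, Matrix.mul_nonsing_inv _ hR, one_mul, mul_assoc,
        ← transpose_mul, Matrix.mul_nonsing_inv _ hR]
      simp
    rw [this, ← hw]
  have hσ : levScore B j = z ⬝ᵥ z := by
    rw [hlev, ← hMw, dotProduct_comm, hquad w, ← hz]
  have hsum : ∑ i, (A j i)^2 = l2 a ^ 2 := (l2_sq a).symm
  -- key inequalities
  have hupper : l2 a ≤ (1 + ε) * l2 z := by
    have h1 : l2 a ^ 2 = z ⬝ᵥ A.mulVec a := by
      rw [dotProduct_mulVec, ← mulVec_transpose, hAtz, dot_self_eq]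
    have h2 : z ⬝ᵥ A.mulVec a ≤ l2 z * ((1 + ε) * l2 a) :=
      le_trans (dot_le_l2 _ _) (mul_le_mul_of_nonneg_left (h a).2 (l2_nonneg z))
    rcases (l2_nonneg a).lt_or_eq with ha0 | ha0
    · have : l2 a * l2 a ≤ ((1 + ε) * l2 z) * l2 a := by
        calc l2 a * l2 a = l2 a ^ 2 := (sq (l2 a)).symm
        _ ≤ l2 z * ((1 + ε) * l2 a) := h1 ▸ h2
        _ = ((1 + ε) * l2 z) * l2 a := by ring
      exact le_of_mul_le_mul_right this ha0
    · rw [← ha0]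
      exact mul_nonneg (by linarith) (l2_nonneg z)
  have hlower : (1 - ε) * l2 z ≤ l2 a := by
    have h1 : l2 z ^ 2 = a ⬝ᵥ w := by
      rw [← hAtz, mulVec_transpose, ← dotProduct_mulVec, ← hz, dotProduct_comm, dot_self_eq]
    have h2 : a ⬝ᵥ w ≤ l2 a * l2 w := dot_le_l2 _ _
    have h3 : (1 - ε) * l2 w ≤ l2 z := (h w).1
    rcases (l2_nonneg z).lt_or_eq with hz0 | hz0
    · have key : (1 - ε) * l2 z * l2 z ≤ l2 a * l2 z := by
        calc (1 - ε) * l2 z * l2 z = (1 - ε) * l2 z ^ 2 := by ring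
        _ = (1 - ε) * (a ⬝ᵥ w) := by rw [h1]
        _ ≤ (1 - ε) * (l2 a * l2 w) := by
            exact mul_le_mul_of_nonneg_left h2 (le_of_lt hε1)
        _ = l2 a * ((1 - ε) * l2 w) := by ring
        _ ≤ l2 a * l2 z := mul_le_mul_of_nonneg_left h3 (l2_nonneg a)
      exact le_of_mul_le_mul_right key hz0
    · rw [← hz0, mul_zero]
      exact l2_nonneg a
  have hσ2 : levScore B j = l2 z ^ 2 := by rw [hσ, dot_self_eq]
  obtain ⟨g1, g2⟩ := scalar_bound hε0 hε2 (l2_nonneg z) (l2_nonneg a) hlower hupper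
  exact ⟨by rw [hσ2, hsum]; exact g1, by rw [hσ2, hsum]; exact g2⟩
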